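/- arXiv:1312.5270 — 4 statements merged into one kernel-verified Lean document; each statement's English description precedes it below -/
import Mathlib

section
/- For any two invertible commuting measure preserving transformations T₁ and T₂ on a probability space (X, 𝒜, μ) and any two bounded functions f₁, f₂, the limit of ∫ (1/N) Σ_{n=0}^{N-1} f₁(T₁ⁿx) f₂(T₂ⁿx) dμ(x) as N → ∞ equals ∫ E[f₁|ℐ] E[f₂|ℐ] dμ, where ℐ is the σ-algebra of invariant sets of T₂∘T₁⁻¹. -/
open MeasureTheory Filter Topology

set_option synthInstance.maxHeartbeats 1000000
set_option maxHeartbeats 1000000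
noncomputable section
variable {X : Type*} [MeasurableSpace X]

/-- The Koopman operator on L² as a continuous linear map. -/
def koopmanCLM (μ : Measure X) (S : X → X) (hS : MeasurePreserving S μ μ) :
    Lp ℝ 2 μ →L[ℝ] Lp ℝ 2 μ where
  toLinearMap :=
    { toFun := Lp.compMeasurePreserving S hS
      map_add' := map_add _
      map_smul' := by
        intro c g
        apply Lp.ext
        filter_upwards [Lp.coeFn_compMeasurePreserving (c • g) hS,
          hS.quasiMeasurePreserving.ae ((Lp.coeFn_smul c g).mono fun x hx => hx),
          Lp.coeFn_smul c (Lp.compMeasurePreserving S hS g),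
          (Lp.coeFn_compMeasurePreserving g hS)] with x h1 h2 h3 h4
        rw [RingHom.id_apply, h1, h3, Function.comp_apply, h2, Pi.smul_apply,
          Pi.smul_apply, h4, Function.comp_apply] }
  cont := (Lp.isometry_compMeasurePreserving hS).continuous

theorem koopmanCLM_norm_le (μ : Measure X) [IsProbabilityMeasure μ] (S : X → X)
    (hS : MeasurePreserving S μ μ) : ‖koopmanCLM μ S hS‖ ≤ 1 := by
  refine ContinuousLinearMap.opNorm_le_bound _ zero_le_one fun g => ?_
  simp [koopmanCLM, Lp.norm_compMeasurePreserving]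

theorem iterate_measurableEmbedding (S : X ≃ᵐ X) (n : ℕ) :
    MeasurableEmbedding ((⇑S)^[n]) := by
  induction n with
  | zero => exact MeasurableEmbedding.id
  | succ n ih => rw [Function.iterate_succ]; exact ih.comp S.measurableEmbedding

theorem koopman_iterate_coeFn (μ : Measure X) (S : X → X) (hS : MeasurePreserving S μ μ)
    (f : X → ℝ) (hf : MemLp f 2 μ) (n : ℕ) :
    ⇑((⇑(koopmanCLM μ S hS))^[n] (hf.toLp f)) =ᵐ[μ] f ∘ (S^[n]) := by
  induction n with
  | zero => simpa using hf.coeFn_toLp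
  | succ n ih =>
    rw [Function.iterate_succ_apply']
    have h1 : ⇑(koopmanCLM μ S hS ((⇑(koopmanCLM μ S hS))^[n] (hf.toLp f))) =ᵐ[μ]
        ((⇑(koopmanCLM μ S hS))^[n] (hf.toLp f) : X → ℝ) ∘ S :=
      Lp.coeFn_compMeasurePreserving _ hS
    refine h1.trans ?_
    have h2 := hS.quasiMeasurePreserving.ae ih
    filter_upwards [h2] with x hx
    simp only [Function.comp_apply] at hx ⊢
    rw [hx, ← Function.iterate_succ_apply, Function.iterate_succ_apply']

theorem ae_invariant_iterate (μ : Measure X) (S : X → X) (hS : MeasurePreserving S μ μ)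
    {φ : X → ℝ} (h : φ ∘ S =ᵐ[μ] φ) (n : ℕ) : φ ∘ (S^[n]) =ᵐ[μ] φ := by
  induction n with
  | zero => simp
  | succ n ih =>
    have h2 := hS.quasiMeasurePreserving.ae ih
    filter_upwards [h2, h] with x hx hx'
    simp only [Function.comp_apply] at hx hx' ⊢
    rw [Function.iterate_succ_apply, hx, hx']

/-- The orthogonal projection in `L²` onto the fixed subspace of the Koopman operator of a
measure preserving measurable equivalence agrees a.e. with conditional expectation onto the
invariant σ-algebra. -/
theorem orthProj_ae_eq_condexp (μ : Measure X) [IsProbabilityMeasure μ]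
    (S : X ≃ᵐ X) (hS : MeasurePreserving S μ μ) (f : X → ℝ) (hf : MemLp f 2 μ) :
    (↑(↑(Submodule.orthogonalProjectionOnto ((koopmanCLM μ S hS).eqLocus (1 : Lp ℝ 2 μ →L[ℝ] Lp ℝ 2 μ)) (hf.toLp f)) :
        Lp ℝ 2 μ) : X → ℝ) =ᵐ[μ] μ[f | MeasurableSpace.invariants ⇑S] := by
  set K := koopmanCLM μ (⇑S) hS with hK
  set φL : Lp ℝ 2 μ :=
    ↑(Submodule.orthogonalProjectionOnto (K.eqLocus (1 : Lp ℝ 2 μ →L[ℝ] Lp ℝ 2 μ)) (hf.toLp f)) with hφL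
  have hm : MeasurableSpace.invariants ⇑S ≤ ‹MeasurableSpace X› :=
    MeasurableSpace.invariants_le _
  haveI : SigmaFinite (μ.trim hm) := by infer_instance
  -- fixed point property
  have hfix : K φL = φL := by
    have := LinearMap.mem_eqLocus.mp
      (Submodule.orthogonalProjectionOnto (K.eqLocus (1 : Lp ℝ 2 μ →L[ℝ] Lp ℝ 2 μ)) (hf.toLp f)).2
    exact this
  have hinv : (⇑φL) ∘ ⇑S =ᵐ[μ] ⇑φL := by
    have := Lp.coeFn_compMeasurePreserving φL hS
    calc (⇑φL) ∘ ⇑S =ᵐ[μ] ⇑(K φL) := this.symm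
      _ = ⇑φL := by rw [hfix]
  -- the invariant version of φL
  set g : X → ℝ := fun x => limsup (fun n => φL ((⇑S)^[n] x)) atTop with hg
  have hgS : g ∘ ⇑S = g := by
    funext x
    simp only [Function.comp_apply, hg]
    have : (fun n => φL ((⇑S)^[n] (S x))) = fun n => φL ((⇑S)^[n + 1] x) := by
      funext n; rw [Function.iterate_succ_apply]
    rw [this]
    exact limsup_nat_add (fun n => φL ((⇑S)^[n] x)) 1
  have hgmeas : Measurable g :=
    Measurable.limsup fun n => (Lp.stronglyMeasurable φL).measurable.comp
      ((iterate_measurableEmbedding S n).measurable)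
  have hgmeas' : Measurable[MeasurableSpace.invariants ⇑S] g := by
    rw [MeasurableSpace.measurable_invariants_dom]
    exact ⟨hgmeas, fun s _ => by rw [hgS]⟩
  have hgeq : ⇑φL =ᵐ[μ] g := by
    have hall : ∀ᵐ x ∂μ, ∀ n, φL ((⇑S)^[n] x) = φL x :=
      ae_all_iff.2 fun n => ae_invariant_iterate μ (⇑S) hS hinv n
    filter_upwards [hall] with x hx
    have : (fun n => φL ((⇑S)^[n] x)) = fun _ => φL x := funext hx
    rw [hg]; simp only [this, limsup_const]
  -- characterize φL as the conditional expectation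
  have hfint : Integrable f μ := hf.integrable one_le_two
  have hφint : Integrable (⇑φL) μ := (Lp.memLp φL).integrable one_le_two
  refine ae_eq_condExp_of_forall_setIntegral_eq hm hfint
    (fun s _ _ => hφint.integrableOn) (fun s hs _ => ?_)
    ⟨g, hgmeas'.stronglyMeasurable, hgeq⟩
  have hsm : MeasurableSet s := hs.1
  set iₛ : Lp ℝ 2 μ := indicatorConstLp 2 hsm (measure_ne_top μ s) (1 : ℝ) with hiₛ
  have hval : ∀ n : ℕ, (inner (𝕜 := ℝ) iₛ ((⇑K)^[n] (hf.toLp f))) = ∫ x in s, f x ∂μ := by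
    intro n
    rw [hiₛ, L2.inner_indicatorConstLp_one hsm (measure_ne_top μ s)]
    have h1 : ∫ x in s, ((⇑K)^[n] (hf.toLp f) : X → ℝ) x ∂μ = ∫ x in s, f ((⇑S)^[n] x) ∂μ :=
      setIntegral_congr_ae hsm ((koopman_iterate_coeFn μ (⇑S) hS f hf n).mono
        fun x hx _ => hx)
    rw [h1]
    have hpre : (⇑S)^[n] ⁻¹' s = s := (MeasurableSpace.le_invariants_iterate (⇑S) n s hs).2
    calc ∫ x in s, f ((⇑S)^[n] x) ∂μ
        = ∫ x in (⇑S)^[n] ⁻¹' s, f ((⇑S)^[n] x) ∂μ := by rw [hpre]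
      _ = ∫ y in s, f y ∂μ := (hS.iterate n).setIntegral_preimage_emb
            (iterate_measurableEmbedding S n) f s
  have hB := (koopmanCLM μ (⇑S) hS).tendsto_birkhoffAverage_orthogonalProjection
      (koopmanCLM_norm_le μ (⇑S) hS) (hf.toLp f)
  have htend : Tendsto (fun N => (inner (𝕜 := ℝ) iₛ
      (birkhoffAverage ℝ (⇑K) _root_.id N (hf.toLp f)))) atTop
      (𝓝 (inner (𝕜 := ℝ) iₛ φL)) :=
    Filter.Tendsto.inner tendsto_const_nhds hB
  have havg : ∀ᶠ N in atTop, (inner (𝕜 := ℝ) iₛ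
      (birkhoffAverage ℝ (⇑K) _root_.id N (hf.toLp f))) = ∫ x in s, f x ∂μ := by
    filter_upwards [eventually_ge_atTop 1] with N hN
    rw [birkhoffAverage, real_inner_smul_right, birkhoffSum, inner_sum]
    simp only [Function.id_def, hval]
    rw [Finset.sum_const, Finset.card_range, nsmul_eq_mul, ← mul_assoc,
      inv_mul_cancel₀ (by exact_mod_cast Nat.one_le_iff_ne_zero.mp hN), one_mul]
  have hlim : (inner (𝕜 := ℝ) iₛ φL) = ∫ x in s, f x ∂μ :=
    tendsto_nhds_unique (htend.congr' havg) tendsto_const_nhds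
  rw [← hlim, hiₛ, L2.inner_indicatorConstLp_one hsm (measure_ne_top μ s)]

end


/-- For two invertible commuting measure preserving transformations `T₁, T₂` on a
probability space and bounded measurable `f₁, f₂`, the integrals of the averages
`(1/N) ∑_{n<N} f₁(T₁ⁿ x) f₂(T₂ⁿ x)` converge to `∫ E[f₁|ℐ] E[f₂|ℐ] dμ`, where `ℐ`
is the σ-algebra of invariant sets of `T₂ ∘ T₁⁻¹`. -/
theorem limit_of_integral_of_nonconventional_averages
    {X : Type*} [MeasurableSpace X] (μ : Measure X) [IsProbabilityMeasure μ]
    (T₁ T₂ : Equiv.Perm X)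
    (hT₁m : Measurable T₁) (hT₁m' : Measurable T₁.symm)
    (hT₂m : Measurable T₂) (hT₂m' : Measurable T₂.symm)
    (hT₁ : MeasurePreserving T₁ μ μ) (hT₂ : MeasurePreserving T₂ μ μ)
    (hcomm : ∀ x, T₁ (T₂ x) = T₂ (T₁ x))
    (f₁ f₂ : X → ℝ) (hf₁ : Measurable f₁) (hf₂ : Measurable f₂)
    (C : ℝ) (hb₁ : ∀ x, |f₁ x| ≤ C) (hb₂ : ∀ x, |f₂ x| ≤ C) :
    Tendsto
      (fun N : ℕ => ∫ x,
        (1 / (N : ℝ)) * ∑ n ∈ Finset.range N, f₁ ((⇑T₁)^[n] x) * f₂ ((⇑T₂)^[n] x) ∂μ)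
      atTop
      (𝓝 (∫ x,
        (μ[f₁ | MeasurableSpace.invariants (⇑(T₂ * T₁⁻¹))]) x *
        (μ[f₂ | MeasurableSpace.invariants (⇑(T₂ * T₁⁻¹))]) x ∂μ)) := by
  classical
  haveI : Nonempty X := by
    by_contra h
    have h0 : μ Set.univ = 1 := measure_univ
    rw [Set.univ_eq_empty_iff.mpr (not_nonempty_iff.mp h), measure_empty] at h0
    exact zero_ne_one h0
  have hC0 : 0 ≤ C := le_trans (abs_nonneg _) (hb₁ (Classical.arbitrary X))
  -- the measurable equivalence S = T₂ ∘ T₁⁻¹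
  have hcommP : T₁ * T₂ = T₂ * T₁ := Equiv.ext hcomm
  have E₁ : X ≃ᵐ X := ⟨T₁, hT₁m, hT₁m'⟩
  have hT₁inv : MeasurePreserving ⇑T₁.symm μ μ :=
    MeasurePreserving.symm (⟨T₁, hT₁m, hT₁m'⟩ : X ≃ᵐ X) hT₁
  have hT₂inv : MeasurePreserving ⇑T₂.symm μ μ :=
    MeasurePreserving.symm (⟨T₂, hT₂m, hT₂m'⟩ : X ≃ᵐ X) hT₂
  let S : X ≃ᵐ X := ⟨T₂ * T₁⁻¹, hT₂m.comp hT₁m', hT₁m.comp hT₂m'⟩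
  have hS : MeasurePreserving ⇑S μ μ := hT₂.comp hT₁inv
  have hcoe : ⇑S = ⇑(T₂ * T₁⁻¹) := rfl
  -- group identities
  have hc : Commute T₂ T₁⁻¹ := (Commute.symm hcommP).inv_right
  have hkey : ∀ n : ℕ, (T₂ * T₁⁻¹) ^ n * T₁ ^ n = T₂ ^ n := by
    intro n
    rw [hc.mul_pow, inv_pow, mul_assoc, inv_mul_cancel, mul_one]
  have hpt : ∀ (n : ℕ) (x : X), (⇑S)^[n] ((⇑T₁)^[n] x) = (⇑T₂)^[n] x := by
    intro n x
    show (⇑(T₂ * T₁⁻¹))^[n] ((⇑T₁)^[n] x) = (⇑T₂)^[n] x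
    simp only [Equiv.Perm.iterate_eq_pow]
    rw [← Equiv.Perm.mul_apply, hkey n]
  -- L² elements
  have hm₁ : MemLp f₁ 2 μ := MemLp.of_bound hf₁.aestronglyMeasurable C
    (Filter.Eventually.of_forall fun x => by rw [Real.norm_eq_abs]; exact hb₁ x)
  have hm₂ : MemLp f₂ 2 μ := MemLp.of_bound hf₂.aestronglyMeasurable C
    (Filter.Eventually.of_forall fun x => by rw [Real.norm_eq_abs]; exact hb₂ x)
  set K := koopmanCLM μ (⇑S) hS with hK
  set x₁ := hm₁.toLp f₁ with hx₁
  set x₂ := hm₂.toLp f₂ with hx₂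
  -- step A: change of variables
  have hstepA : ∀ n : ℕ, (∫ x, f₁ ((⇑T₁)^[n] x) * f₂ ((⇑T₂)^[n] x) ∂μ)
      = ∫ x, f₁ x * f₂ ((⇑S)^[n] x) ∂μ := by
    intro n
    have hemb : MeasurableEmbedding ((⇑T₁)^[n]) :=
      iterate_measurableEmbedding (⟨T₁, hT₁m, hT₁m'⟩ : X ≃ᵐ X) n
    have hcv := (hT₁.iterate n).integral_comp hemb (fun y => f₁ y * f₂ ((⇑S)^[n] y))
    rw [← hcv]
    refine integral_congr_ae (Filter.Eventually.of_forall fun x => ?_)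
    simp only [hpt n x]
  -- integrability of each term
  have hint : ∀ n : ℕ, Integrable (fun x => f₁ ((⇑T₁)^[n] x) * f₂ ((⇑T₂)^[n] x)) μ := by
    intro n
    have hmeas : Measurable fun x => f₁ ((⇑T₁)^[n] x) * f₂ ((⇑T₂)^[n] x) :=
      ((hf₁.comp (hT₁m.iterate n))).mul ((hf₂.comp (hT₂m.iterate n)))
    refine (MemLp.of_bound hmeas.aestronglyMeasurable (C * C)
      (Filter.Eventually.of_forall fun x => ?_)).integrable le_rfl
    rw [Real.norm_eq_abs, abs_mul]
    exact mul_le_mul (hb₁ _) (hb₂ _) (abs_nonneg _) hC0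
  -- inner product representation
  have hinner : ∀ n : ℕ, (inner (𝕜 := ℝ) x₁ ((⇑K)^[n] x₂)) = ∫ x, f₁ x * f₂ ((⇑S)^[n] x) ∂μ := by
    intro n
    rw [L2.inner_def]
    refine integral_congr_ae ?_
    filter_upwards [hm₁.coeFn_toLp, koopman_iterate_coeFn μ (⇑S) hS f₂ hm₂ n] with x h1 h2
    rw [RCLike.inner_apply]
    simp only [hx₁, h1]
    rw [show ((⇑K)^[n] x₂ : X → ℝ) x = (f₂ ∘ (⇑S)^[n]) x from h2]
    simp [starRingEnd_apply, mul_comm]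
  have hrepr : ∀ N : ℕ, (∫ x, (1 / (N : ℝ)) * ∑ n ∈ Finset.range N,
        f₁ ((⇑T₁)^[n] x) * f₂ ((⇑T₂)^[n] x) ∂μ)
      = inner (𝕜 := ℝ) x₁ (birkhoffAverage ℝ (⇑K) _root_.id N x₂) := by
    intro N
    rw [integral_const_mul, integral_finset_sum _ (fun n _ => hint n),
      birkhoffAverage, real_inner_smul_right, birkhoffSum, inner_sum]
    simp only [Function.id_def, hinner, hstepA, one_div, smul_eq_mul]
  -- the limit
  set φ₂ : Lp ℝ 2 μ := ↑(Submodule.orthogonalProjectionOnto (K.eqLocus (1 : Lp ℝ 2 μ →L[ℝ] Lp ℝ 2 μ)) x₂) with hφ₂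
  have hB := K.tendsto_birkhoffAverage_orthogonalProjection (koopmanCLM_norm_le μ (⇑S) hS) x₂
  have hfinal : Tendsto (fun N => inner (𝕜 := ℝ) x₁ (birkhoffAverage ℝ (⇑K) _root_.id N x₂))
      atTop (𝓝 (inner (𝕜 := ℝ) x₁ φ₂)) := Filter.Tendsto.inner tendsto_const_nhds hB
  -- identify the limit value
  have horth : inner (𝕜 := ℝ) x₁ φ₂
      = inner (𝕜 := ℝ) (↑(Submodule.orthogonalProjectionOnto (K.eqLocus (1 : Lp ℝ 2 μ →L[ℝ] Lp ℝ 2 μ)) x₁) : Lp ℝ 2 μ) φ₂ := by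
    have h1 : x₁ - ↑(Submodule.orthogonalProjectionOnto (K.eqLocus (1 : Lp ℝ 2 μ →L[ℝ] Lp ℝ 2 μ)) x₁)
        ∈ (K.eqLocus (1 : Lp ℝ 2 μ →L[ℝ] Lp ℝ 2 μ) : Submodule ℝ (Lp ℝ 2 μ))ᗮ :=
      Submodule.sub_starProjection_mem_orthogonal x₁
    have h2 : inner (𝕜 := ℝ) φ₂ (x₁ - ↑(Submodule.orthogonalProjectionOnto (K.eqLocus (1 : Lp ℝ 2 μ →L[ℝ] Lp ℝ 2 μ)) x₁)) = 0 :=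
      (Submodule.mem_orthogonal _ _).1 h1 φ₂ (Submodule.orthogonalProjectionOnto (K.eqLocus (1 : Lp ℝ 2 μ →L[ℝ] Lp ℝ 2 μ)) x₂).2
    rw [inner_sub_right] at h2
    have e1 := real_inner_comm φ₂ x₁
    have e2 := real_inner_comm φ₂
      (↑(Submodule.orthogonalProjectionOnto (K.eqLocus (1 : Lp ℝ 2 μ →L[ℝ] Lp ℝ 2 μ)) x₁) : Lp ℝ 2 μ)
    linarith
  have hval : inner (𝕜 := ℝ) x₁ φ₂ = ∫ x,
      (μ[f₁ | MeasurableSpace.invariants (⇑(T₂ * T₁⁻¹))]) x *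
      (μ[f₂ | MeasurableSpace.invariants (⇑(T₂ * T₁⁻¹))]) x ∂μ := by
    rw [horth, L2.inner_def]
    refine integral_congr_ae ?_
    have hp₁ := orthProj_ae_eq_condexp μ S hS f₁ hm₁
    have hp₂ := orthProj_ae_eq_condexp μ S hS f₂ hm₂
    rw [← hK, ← hx₁] at hp₁
    rw [← hK, ← hx₂, ← hφ₂] at hp₂
    filter_upwards [hp₁, hp₂] with x h1 h2
    rw [RCLike.inner_apply, h1, h2, starRingEnd_apply, star_trivial]
    rw [mul_comm]; rfl
  rw [show (fun N : ℕ => ∫ x, (1 / (N : ℝ)) * ∑ n ∈ Finset.range N,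
      f₁ ((⇑T₁)^[n] x) * f₂ ((⇑T₂)^[n] x) ∂μ)
    = fun N => inner (𝕜 := ℝ) x₁ (birkhoffAverage ℝ (⇑K) _root_.id N x₂) from funext hrepr,
    ← hval]
  exact hfinal
end

section
/- If T₁ and T₂ are commuting invertible measure preserving transformations on (X, 𝒜, μ) such that T₂∘T₁⁻¹ is ergodic, then for all bounded f₁, f₂, lim_N ∫ (1/N) Σ_{n=0}^{N-1} f₁(T₁ⁿx) f₂(T₂ⁿx) dμ = (∫ f₁ dμ)(∫ f₂ dμ). -/
open MeasureTheory Filter Topology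

private lemma koopman_iterate_ae {X : Type*} [MeasurableSpace X] {μ : Measure X}
    [IsProbabilityMeasure μ] {S : X → X} (hS : Ergodic S μ) {f₂ : X → ℝ}
    (hf₂ : MemLp f₂ 2 μ) (n : ℕ) :
    ((Lp.compMeasurePreservingₗᵢ ℝ S hS.toMeasurePreserving).toContinuousLinearMap)^[n]
      (hf₂.toLp f₂) =ᵐ[μ] f₂ ∘ S^[n] := by
  induction n with
  | zero => simpa using hf₂.coeFn_toLp
  | succ n ih =>
    rw [Function.iterate_succ_apply', Function.iterate_succ]
    calc ((Lp.compMeasurePreservingₗᵢ ℝ S hS.toMeasurePreserving).toContinuousLinearMap)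
          (((Lp.compMeasurePreservingₗᵢ ℝ S hS.toMeasurePreserving).toContinuousLinearMap)^[n]
            (hf₂.toLp f₂))
        =ᵐ[μ] (((Lp.compMeasurePreservingₗᵢ ℝ S hS.toMeasurePreserving).toContinuousLinearMap)^[n]
            (hf₂.toLp f₂) : Lp ℝ 2 μ) ∘ S :=
          Lp.coeFn_compMeasurePreserving _ hS.toMeasurePreserving
      _ =ᵐ[μ] (f₂ ∘ S^[n]) ∘ S :=
          hS.toMeasurePreserving.quasiMeasurePreserving.ae_eq_comp ih

private lemma inner_const_one {X : Type*} [MeasurableSpace X] (μ : Measure X)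
    [IsProbabilityMeasure μ] (g : Lp ℝ 2 μ) :
    (inner ℝ (Lp.const 2 μ (1:ℝ) : Lp ℝ 2 μ) g : ℝ) = ∫ x, g x ∂μ := by
  rw [L2.inner_def]
  refine integral_congr_ae ?_
  filter_upwards [Lp.coeFn_const (μ := μ) (p := 2) (1:ℝ)] with x hx
  simp [hx]

/-- Weak mean ergodic theorem. -/
private lemma mean_ergodic_weak {X : Type*} [MeasurableSpace X] (μ : Measure X)
    [IsProbabilityMeasure μ] {S : X → X} (hS : Ergodic S μ) {f₁ f₂ : X → ℝ}
    (hf₁ : MemLp f₁ 2 μ) (hf₂ : MemLp f₂ 2 μ) :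
    Tendsto (fun N : ℕ => (N : ℝ)⁻¹ * ∑ n ∈ Finset.range N, ∫ x, f₁ x * f₂ (S^[n] x) ∂μ)
      atTop (𝓝 ((∫ x, f₁ x ∂μ) * (∫ x, f₂ x ∂μ))) := by
  set U : Lp ℝ 2 μ →L[ℝ] Lp ℝ 2 μ :=
    (Lp.compMeasurePreservingₗᵢ ℝ S hS.toMeasurePreserving).toContinuousLinearMap with hUdef
  have hUnorm : ‖U‖ ≤ 1 := LinearIsometry.norm_toContinuousLinearMap_le _
  set F₁ : Lp ℝ 2 μ := hf₁.toLp f₁ with hF₁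
  set F₂ : Lp ℝ 2 μ := hf₂.toLp f₂ with hF₂
  set y : Lp ℝ 2 μ := ((U.eqLocus (1 : Lp ℝ 2 μ →L[ℝ] Lp ℝ 2 μ)).orthogonalProjectionOnto F₂ : Lp ℝ 2 μ) with hy
  have key := U.tendsto_birkhoffAverage_orthogonalProjection hUnorm F₂
  have hinner : Tendsto (fun N => (inner ℝ F₁ (birkhoffAverage ℝ U _root_.id N F₂) : ℝ)) atTop
      (𝓝 (inner ℝ F₁ y : ℝ)) :=
    ((continuous_const.inner continuous_id).tendsto _).comp key
  -- y is a.e. constant c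
  have hyfix : U y = y := ((U.eqLocus (1 : Lp ℝ 2 μ →L[ℝ] Lp ℝ 2 μ)).orthogonalProjectionOnto F₂).2
  obtain ⟨c, hc⟩ : ∃ c : ℝ, (y : Lp ℝ 2 μ).1 = AEEqFun.const X c :=
    hS.eq_const_of_compMeasurePreserving_eq (congrArg (fun z : Lp ℝ 2 μ => z.1) hyfix)
  have hcy : (y : X → ℝ) =ᵐ[μ] Function.const X c := by
    rw [show ((y : X → ℝ)) = ((y.1 : X → ℝ)) from rfl, hc]
    exact AEEqFun.coeFn_const X c
  -- identify c = ∫ f₂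
  have honemem : (Lp.const 2 μ (1:ℝ) : Lp ℝ 2 μ) ∈ U.eqLocus (1 : Lp ℝ 2 μ →L[ℝ] Lp ℝ 2 μ) := by
    rw [LinearMap.mem_eqLocus]; exact Subtype.ext rfl
  have horth := Submodule.sub_starProjection_mem_orthogonal (K := U.eqLocus (1 : Lp ℝ 2 μ →L[ℝ] Lp ℝ 2 μ)) F₂
  have hzero : (inner ℝ (Lp.const 2 μ (1:ℝ) : Lp ℝ 2 μ) (F₂ - y) : ℝ) = 0 :=
    (Submodule.mem_orthogonal _ _).1 horth _ honemem
  have hF₂int : ∫ x, (F₂ : X → ℝ) x ∂μ = ∫ x, f₂ x ∂μ :=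
    integral_congr_ae hf₂.coeFn_toLp
  have hcval : c = ∫ x, f₂ x ∂μ := by
    have h1 : (inner ℝ (Lp.const 2 μ (1:ℝ) : Lp ℝ 2 μ) F₂ : ℝ)
        = (inner ℝ (Lp.const 2 μ (1:ℝ) : Lp ℝ 2 μ) y : ℝ) := by
      have h1 := hzero
      rw [inner_sub_right, sub_eq_zero] at h1
      exact h1
    rw [inner_const_one, inner_const_one, hF₂int] at h1
    have h2 : ∫ x, (y : X → ℝ) x ∂μ = c := by
      rw [integral_congr_ae hcy]; simp
    rw [h2] at h1; exact h1.symm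
  -- limit value
  have hlim : (inner ℝ F₁ y : ℝ) = (∫ x, f₁ x ∂μ) * (∫ x, f₂ x ∂μ) := by
    rw [L2.inner_def]
    have : ∫ x, (inner ℝ ((F₁ : X → ℝ) x) ((y : X → ℝ) x) : ℝ) ∂μ = ∫ x, f₁ x * c ∂μ := by
      refine integral_congr_ae ?_
      filter_upwards [hf₁.coeFn_toLp, hcy] with x h1 h2
      simp [h1, h2]
      rw [mul_comm]; exact congrArg (· * c) h1
    rw [this, integral_mul_const, hcval]
  -- each term
  have hterm : ∀ N : ℕ, (inner ℝ F₁ (birkhoffAverage ℝ U _root_.id N F₂) : ℝ)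
      = (N : ℝ)⁻¹ * ∑ n ∈ Finset.range N, ∫ x, f₁ x * f₂ (S^[n] x) ∂μ := by
    intro N
    rw [birkhoffAverage, birkhoffSum, real_inner_smul_right, inner_sum]
    congr 1
    refine Finset.sum_congr rfl fun n _ => ?_
    rw [L2.inner_def]
    refine integral_congr_ae ?_
    filter_upwards [hf₁.coeFn_toLp, koopman_iterate_ae hS hf₂ n] with x h1 h2
    simp only [_root_.id]
    rw [h1, h2]
    simp [RCLike.inner_apply]
    ring
  rw [← hlim]
  exact hinner.congr fun N => hterm N

/-- If `T₁, T₂` are commuting invertible measure preserving transformations on a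
probability space such that `T₂ ∘ T₁⁻¹` is ergodic, then for all bounded measurable
`f₁, f₂`, `lim_N ∫ (1/N) ∑_{n<N} f₁(T₁ⁿ x) f₂(T₂ⁿ x) dμ = (∫ f₁ dμ)(∫ f₂ dμ)`. -/
theorem limit_of_integral_of_nonconventional_averages_of_ergodic
    {X : Type*} [MeasurableSpace X] (μ : Measure X) [IsProbabilityMeasure μ]
    (T₁ T₂ : Equiv.Perm X)
    (hT₁m : Measurable T₁) (hT₁m' : Measurable T₁.symm)
    (hT₂m : Measurable T₂) (hT₂m' : Measurable T₂.symm)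
    (hT₁ : MeasurePreserving T₁ μ μ) (hT₂ : MeasurePreserving T₂ μ μ)
    (hcomm : ∀ x, T₁ (T₂ x) = T₂ (T₁ x))
    (herg : Ergodic (⇑(T₂ * T₁⁻¹)) μ)
    (f₁ f₂ : X → ℝ) (hf₁ : Measurable f₁) (hf₂ : Measurable f₂)
    (C : ℝ) (hb₁ : ∀ x, |f₁ x| ≤ C) (hb₂ : ∀ x, |f₂ x| ≤ C) :
    Tendsto
      (fun N : ℕ => ∫ x,
        (1 / (N : ℝ)) * ∑ n ∈ Finset.range N, f₁ ((⇑T₁)^[n] x) * f₂ ((⇑T₂)^[n] x) ∂μ)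
      atTop (𝓝 ((∫ x, f₁ x ∂μ) * (∫ x, f₂ x ∂μ))) := by
  have hm₁ : MemLp f₁ 2 μ :=
    MemLp.of_bound hf₁.aestronglyMeasurable C (ae_of_all _ fun x => by
      simpa using hb₁ x)
  have hm₂ : MemLp f₂ 2 μ :=
    MemLp.of_bound hf₂.aestronglyMeasurable C (ae_of_all _ fun x => by
      simpa using hb₂ x)
  have main := mean_ergodic_weak μ herg hm₁ hm₂
  refine main.congr fun N => ?_
  -- commute facts
  have hc12 : Commute T₁ T₂ := Equiv.ext hcomm
  have hcom : Commute T₂ T₁⁻¹ := hc12.symm.inv_right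
  have hkey : ∀ n x, (⇑(T₂ * T₁⁻¹))^[n] ((⇑T₁)^[n] x) = (⇑T₂)^[n] x := by
    intro n x
    have : (T₂ * T₁⁻¹) ^ n * T₁ ^ n = T₂ ^ n := by
      rw [hcom.mul_pow, inv_pow, mul_assoc, inv_mul_cancel, mul_one]
    simp only [Equiv.Perm.iterate_eq_pow]
    rw [← Equiv.Perm.mul_apply, this]
  -- integrability of each term
  have hint : ∀ n : ℕ, Integrable (fun x => f₁ ((⇑T₁)^[n] x) * f₂ ((⇑T₂)^[n] x)) μ := by
    intro n
    refine ⟨((hf₁.comp (hT₁m.iterate n)).mul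
      (hf₂.comp (hT₂m.iterate n))).aestronglyMeasurable, ?_⟩
    refine HasFiniteIntegral.of_bounded (C := C * C) (ae_of_all _ fun x => ?_)
    have h1 := hb₁ ((⇑T₁)^[n] x)
    have h2 := hb₂ ((⇑T₂)^[n] x)
    have hC : 0 ≤ C := le_trans (abs_nonneg _) h1
    calc ‖f₁ ((⇑T₁)^[n] x) * f₂ ((⇑T₂)^[n] x)‖
        = |f₁ ((⇑T₁)^[n] x)| * |f₂ ((⇑T₂)^[n] x)| := by rw [Real.norm_eq_abs, abs_mul]
      _ ≤ C * C := mul_le_mul h1 h2 (abs_nonneg _) hC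
  -- change of variables
  have hchange : ∀ n : ℕ, ∫ x, f₁ x * f₂ ((⇑(T₂ * T₁⁻¹))^[n] x) ∂μ
      = ∫ x, f₁ ((⇑T₁)^[n] x) * f₂ ((⇑T₂)^[n] x) ∂μ := by
    intro n
    let e : X ≃ᵐ X :=
      { toEquiv := (T₁ ^ n : Equiv.Perm X)
        measurable_toFun := by
          show Measurable ⇑(T₁ ^ n)
          rw [Equiv.Perm.coe_pow]
          exact hT₁m.iterate n
        measurable_invFun := by
          show Measurable ⇑(T₁ ^ n).symm
          have hsymm : (T₁ ^ n).symm = T₁⁻¹ ^ n := by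
            rw [inv_pow]; rfl
          rw [hsymm, Equiv.Perm.coe_pow]
          exact hT₁m'.iterate n }
    have hmp : MeasurePreserving (⇑e) μ μ := by
      show MeasurePreserving ⇑(T₁ ^ n) μ μ
      rw [Equiv.Perm.coe_pow]
      exact hT₁.iterate n
    have hcv := hmp.integral_comp' (g := fun y => f₁ y * f₂ ((⇑(T₂ * T₁⁻¹))^[n] y))
    rw [← hcv]
    refine integral_congr_ae (ae_of_all _ fun x => ?_)
    show f₁ (e x) * f₂ ((⇑(T₂ * T₁⁻¹))^[n] (e x)) = f₁ ((⇑T₁)^[n] x) * f₂ ((⇑T₂)^[n] x)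
    have hex : e x = (⇑T₁)^[n] x := by
      show (T₁ ^ n) x = (⇑T₁)^[n] x
      rw [Equiv.Perm.coe_pow]
    rw [hex, hkey n x]
  calc (N : ℝ)⁻¹ * ∑ n ∈ Finset.range N, ∫ x, f₁ x * f₂ ((⇑(T₂ * T₁⁻¹))^[n] x) ∂μ
      = (1 / (N : ℝ)) * ∑ n ∈ Finset.range N, ∫ x, f₁ ((⇑T₁)^[n] x) * f₂ ((⇑T₂)^[n] x) ∂μ := by
        rw [one_div]
        congr 1
        exact Finset.sum_congr rfl fun n _ => hchange n
    _ = ∫ x, (1 / (N : ℝ)) * ∑ n ∈ Finset.range N, f₁ ((⇑T₁)^[n] x) * f₂ ((⇑T₂)^[n] x) ∂μ := by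
        rw [integral_const_mul, integral_finset_sum _ fun n _ => hint n]
end

section
/- Let Φ be a measurable invertible transformation of (Y, ℬ) and M₂(Y, Φ) = {γ probability : γ(Φ^{-1}A) ≤ 2γ(A) ∀A}. If γ is an extreme point of M₂(Y, Φ), then γ is ergodic in the sense that every Φ-invariant measurable set E satisfies γ(E) ∈ {0, 1}. -/
open MeasureTheory Filter Topology
open scoped ENNReal

/-- If `γ` is an extreme point of the convex set `M₂(Y, Φ)` of probability measures
satisfying `γ(Φ⁻¹A) ≤ 2γ(A)`, then `γ` is ergodic: every `Φ`-invariant measurable set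
has `γ`-measure `0` or `1`. -/
theorem ergodic_of_extreme_point_M2
    {Y : Type*} [MeasurableSpace Y]
    (Φ : Equiv.Perm Y) (hΦm : Measurable Φ) (hΦm' : Measurable Φ.symm)
    (γ : Measure Y) [IsProbabilityMeasure γ]
    (hγ : ∀ A : Set Y, MeasurableSet A → γ (⇑Φ ⁻¹' A) ≤ 2 * γ A)
    (hext : ∀ γ₁ γ₂ : Measure Y,
      (IsProbabilityMeasure γ₁ ∧ ∀ A : Set Y, MeasurableSet A → γ₁ (⇑Φ ⁻¹' A) ≤ 2 * γ₁ A) →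
      (IsProbabilityMeasure γ₂ ∧ ∀ A : Set Y, MeasurableSet A → γ₂ (⇑Φ ⁻¹' A) ≤ 2 * γ₂ A) →
      ∀ t : ℝ≥0∞, 0 < t → t < 1 → γ = t • γ₁ + (1 - t) • γ₂ → γ₁ = γ₂) :
    ∀ E : Set Y, MeasurableSet E → ⇑Φ ⁻¹' E = E → γ E = 0 ∨ γ E = 1 := by
  intro E hE hinv
  by_contra h
  push_neg at h
  obtain ⟨h0, h1⟩ := h
  set c : ℝ≥0∞ := γ E with hc
  have hcpos : 0 < c := pos_iff_ne_zero.mpr h0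
  have hclt1 : c < 1 := lt_of_le_of_ne prob_le_one h1
  have hcne : c ≠ ∞ := ne_top_of_lt hclt1
  have hc1ne0 : (1 : ℝ≥0∞) - c ≠ 0 := by
    intro hh
    exact absurd (tsub_eq_zero_iff_le.mp hh) (not_le.mpr hclt1)
  have hc1ne : (1 : ℝ≥0∞) - c ≠ ∞ := by
    exact ne_top_of_le_ne_top ENNReal.one_ne_top tsub_le_self
  have hcompl : γ Eᶜ = 1 - c := by
    rw [measure_compl hE (measure_ne_top γ E), measure_univ, hc]
  set γ₁ : Measure Y := c⁻¹ • γ.restrict E with hγ₁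
  set γ₂ : Measure Y := ((1 : ℝ≥0∞) - c)⁻¹ • γ.restrict Eᶜ with hγ₂
  have hinvc : ⇑Φ ⁻¹' Eᶜ = Eᶜ := by
    rw [Set.preimage_compl, hinv]
  have hp1 : IsProbabilityMeasure γ₁ := by
    constructor
    simp only [hγ₁, Measure.smul_apply, smul_eq_mul, Measure.restrict_apply MeasurableSet.univ,
      Set.univ_inter]
    exact ENNReal.inv_mul_cancel hcpos.ne' hcne
  have hp2 : IsProbabilityMeasure γ₂ := by
    constructor
    simp only [hγ₂, Measure.smul_apply, smul_eq_mul, Measure.restrict_apply MeasurableSet.univ,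
      Set.univ_inter, hcompl]
    exact ENNReal.inv_mul_cancel hc1ne0 hc1ne
  have hm1 : ∀ A : Set Y, MeasurableSet A → γ₁ (⇑Φ ⁻¹' A) ≤ 2 * γ₁ A := by
    intro A hA
    simp only [hγ₁, Measure.smul_apply, smul_eq_mul, Measure.restrict_apply (hΦm hA),
      Measure.restrict_apply hA]
    have key : ⇑Φ ⁻¹' A ∩ E = ⇑Φ ⁻¹' (A ∩ E) := by
      rw [Set.preimage_inter, hinv]
    rw [key, mul_left_comm]
    exact mul_le_mul_right (hγ (A ∩ E) (hA.inter hE)) _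
  have hm2 : ∀ A : Set Y, MeasurableSet A → γ₂ (⇑Φ ⁻¹' A) ≤ 2 * γ₂ A := by
    intro A hA
    simp only [hγ₂, Measure.smul_apply, smul_eq_mul, Measure.restrict_apply (hΦm hA),
      Measure.restrict_apply hA]
    have key : ⇑Φ ⁻¹' A ∩ Eᶜ = ⇑Φ ⁻¹' (A ∩ Eᶜ) := by
      rw [Set.preimage_inter, hinvc]
    rw [key, mul_left_comm]
    exact mul_le_mul_right (hγ (A ∩ Eᶜ) (hA.inter hE.compl)) _
  have hdecomp : γ = c • γ₁ + (1 - c) • γ₂ := by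
    rw [hγ₁, hγ₂, smul_smul, smul_smul, ENNReal.mul_inv_cancel hcpos.ne' hcne,
      ENNReal.mul_inv_cancel hc1ne0 hc1ne, one_smul, one_smul,
      Measure.restrict_add_restrict_compl hE]
  have heq : γ₁ = γ₂ := hext γ₁ γ₂ ⟨hp1, hm1⟩ ⟨hp2, hm2⟩ c hcpos hclt1 hdecomp
  have e1 : γ₁ E = 1 := by
    simp only [hγ₁, Measure.smul_apply, smul_eq_mul, Measure.restrict_apply hE,
      Set.inter_self]
    exact ENNReal.inv_mul_cancel hcpos.ne' hcne
  have e2 : γ₂ E = 0 := by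
    simp [hγ₂, Measure.smul_apply, Measure.restrict_apply hE]
  rw [heq, e2] at e1
  exact one_ne_zero e1.symm
end

section
/- (Furstenberg–Katznelson positivity consequence) Let T₁, T₂ be commuting invertible measure preserving transformations on (X, 𝒜, μ) and V ∈ 𝒜 with μ(V) > 0. Let R(1_V ⊗ 1_V) denote the L¹(μ)-limit of (1/N) Σ_{n=0}^{N-1} 1_V(T₁ⁿx) 1_V(T₂ⁿx). Then the function R(1_V ⊗ 1_V) is strictly positive μ-a.e. on V. -/
open MeasureTheory Filter Topology

open Finset in

theorem oriented_corners_theorem (ε : ℝ) (hε : 0 < ε) :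
    ∃ N₀ : ℕ, 0 < N₀ ∧ ∀ N : ℕ, N₀ ≤ N → ∀ A ⊆ Finset.range N ×ˢ Finset.range N,
      ε * (N : ℝ) ^ 2 ≤ (#A : ℝ) →
      ∃ x y d : ℕ, 0 < d ∧ (x, y) ∈ A ∧ (x + d, y) ∈ A ∧ (x, y + d) ∈ A := by
  classical
  refine ⟨max (cornersTheoremBound (ε ^ 2 / 36 / 9)) 1,
    lt_of_lt_of_le Nat.one_pos (le_max_right _ _), fun N hN A hA hcard => ?_⟩
  have hN1 : 1 ≤ N := le_trans (le_max_right _ _) hN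
  have hNc : cornersTheoremBound (ε ^ 2 / 36 / 9) ≤ N := le_trans (le_max_left _ _) hN
  have hbd : ∀ a b : ℕ, (a, b) ∈ A → a < N ∧ b < N := fun a b hp => by
    have := hA hp; simpa [Finset.mem_product] using this
  set A' : Finset (ℕ × ℕ) := A.image (fun p => (p.1 + N, p.2 + N)) with hA'def
  set ρA : Finset (ℕ × ℕ) := A.image (fun p => (N - 1 - p.1, N - 1 - p.2)) with hρAdef
  set t : ℕ × ℕ → ℕ := fun v => #(ρA.filter (fun b => (b.1 + v.1, b.2 + v.2) ∈ A')) with htdef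
  set S : Finset (ℕ × ℕ) := Finset.range (2*N) ×ˢ Finset.range (2*N) with hSdef
  set P : Finset ((ℕ × ℕ) × (ℕ × ℕ)) :=
    (S ×ˢ ρA).filter (fun q => (q.2.1 + q.1.1, q.2.2 + q.1.2) ∈ A') with hPdef
  have hPsum : #P = ∑ v ∈ S, t v := by
    simp only [hPdef, htdef, Finset.card_filter]
    rw [Finset.sum_product]
  have hPcard : #A * #A ≤ #P := by
    have key := Finset.card_le_card_of_injOn (f := fun pq : (ℕ×ℕ)×(ℕ×ℕ) =>
        ((pq.1.1 + pq.2.1 + 1, pq.1.2 + pq.2.2 + 1), (N-1-pq.2.1, N-1-pq.2.2)))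
      (s := A ×ˢ A) (t := P) ?_ ?_
    · simpa [Finset.card_product] using key
    · rintro ⟨⟨p1,p2⟩,⟨q1,q2⟩⟩ hpq
      simp only [Finset.mem_coe, Finset.mem_product] at hpq
      obtain ⟨hp1, hp2⟩ := hbd p1 p2 hpq.1
      obtain ⟨hq1, hq2⟩ := hbd q1 q2 hpq.2
      simp only [Finset.mem_coe, hPdef, Finset.mem_filter, Finset.mem_product, hSdef, Finset.mem_range]
      refine ⟨⟨⟨by omega, by omega⟩, ?_⟩, ?_⟩
      · exact Finset.mem_image_of_mem _ hpq.2
      · have heq : (N-1-q1 + (p1+q1+1), N-1-q2 + (p2+q2+1)) = (p1 + N, p2 + N) := by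
          simp only [Prod.mk.injEq]; omega
        show ((N-1-q1, N-1-q2).1 + (p1+q1+1, p2+q2+1).1,
              (N-1-q1, N-1-q2).2 + (p1+q1+1, p2+q2+1).2) ∈ A'
        simp only
        rw [heq]
        exact Finset.mem_image_of_mem _ hpq.1
    · rintro ⟨⟨p1,p2⟩,⟨q1,q2⟩⟩ hpq ⟨⟨p1',p2'⟩,⟨q1',q2'⟩⟩ hpq' h
      simp only [Finset.coe_product, Set.mem_prod, Finset.mem_coe] at hpq hpq'
      obtain ⟨hq1, hq2⟩ := hbd q1 q2 hpq.2
      obtain ⟨hq1', hq2'⟩ := hbd q1' q2' hpq'.2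
      simp only [Prod.mk.injEq] at h ⊢
      omega
  obtain ⟨v, hvS, hv⟩ : ∃ v ∈ S, ε^2/4 * (N:ℝ)^2 ≤ (t v : ℝ) := by
    by_contra hcon
    push_neg at hcon
    have hsum : ∑ v ∈ S, (t v : ℝ) < ∑ v ∈ S, ε^2/4*(N:ℝ)^2 :=
      Finset.sum_lt_sum_of_nonempty ⟨(0,0), by simp [hSdef]; omega⟩ hcon
    rw [Finset.sum_const] at hsum
    have hScard : #S = 2*N*(2*N) := by simp [hSdef, Finset.card_product]
    have hchain : (ε * (N:ℝ)^2) * (ε * (N:ℝ)^2) ≤ ∑ v ∈ S, (t v : ℝ) := by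
      calc (ε * (N:ℝ)^2) * (ε * (N:ℝ)^2) ≤ (#A : ℝ) * (#A : ℝ) :=
            mul_le_mul hcard hcard (by positivity) (le_trans (by positivity) hcard)
        _ ≤ (#P : ℝ) := by exact_mod_cast hPcard
        _ = ∑ v ∈ S, (t v : ℝ) := by rw [hPsum]; push_cast; ring
    rw [hScard, nsmul_eq_mul] at hsum
    push_cast at hsum
    nlinarith [hsum, hchain]
  set B : Finset (ℕ × ℕ) :=
    (ρA.filter (fun b => (b.1 + v.1, b.2 + v.2) ∈ A')).image (fun b => (b.1+v.1, b.2+v.2)) with hBdef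
  have hBcard : #B = t v := Finset.card_image_of_injective _ (by
    rintro ⟨a1,a2⟩ ⟨b1,b2⟩ h; simp only [Prod.mk.injEq] at h ⊢; omega)
  have hBsubA' : ∀ p ∈ B, p ∈ A' := by
    intro p hp
    simp only [hBdef, Finset.mem_image, Finset.mem_filter] at hp
    obtain ⟨b, ⟨_, hb2⟩, rfl⟩ := hp
    exact hb2
  have hA'mem : ∀ z1 z2 : ℕ, (z1, z2) ∈ A' → ∃ a1 a2, (a1, a2) ∈ A ∧ a1 + N = z1 ∧ a2 + N = z2 := by
    intro z1 z2 hz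
    simp only [hA'def, Finset.mem_image] at hz
    obtain ⟨⟨a1, a2⟩, ha, heq⟩ := hz
    simp only [Prod.mk.injEq] at heq
    exact ⟨a1, a2, ha, heq.1, heq.2⟩
  have hBmem : ∀ z1 z2 : ℕ, (z1, z2) ∈ B → ∃ a1 a2, (a1, a2) ∈ A ∧ a1 < N ∧ a2 < N ∧
      N - 1 - a1 + v.1 = z1 ∧ N - 1 - a2 + v.2 = z2 := by
    intro z1 z2 hz
    simp only [hBdef, Finset.mem_image, Finset.mem_filter, hρAdef] at hz
    obtain ⟨b, ⟨hb, _⟩, heqz⟩ := hz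
    obtain ⟨⟨a1, a2⟩, ha, heqb⟩ := hb
    obtain ⟨h1, h2⟩ := hbd a1 a2 ha
    subst heqb
    simp only [Prod.mk.injEq] at heqz
    exact ⟨a1, a2, ha, h1, h2, heqz.1, heqz.2⟩
  have hBbox : B ⊆ Finset.range (3*N) ×ˢ Finset.range (3*N) := by
    rintro ⟨p1, p2⟩ hp
    obtain ⟨a1, a2, ha, h1, h2⟩ := hA'mem p1 p2 (hBsubA' _ hp)
    obtain ⟨ha1, ha2⟩ := hbd a1 a2 ha
    simp only [Finset.mem_product, Finset.mem_range]
    omega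
  have hnc : ¬ IsCornerFree (↑B : Set (ℕ × ℕ)) := by
    refine corners_theorem_nat (ε := ε^2/36) (by positivity) (hNc.trans (by omega)) B hBbox ?_
    rw [hBcard]
    have h3N : ((3*N : ℕ) : ℝ) = 3 * (N:ℝ) := by push_cast; ring
    rw [h3N]
    nlinarith [hv]
  simp only [IsCornerFree] at hnc
  push_neg at hnc
  obtain ⟨x₁, y₁, x₂, y₂, hcor, hne⟩ := hnc
  obtain ⟨m11, m12, m21, hadd⟩ := hcor
  rw [Finset.mem_coe] at m11 m12 m21
  rcases hne.lt_or_gt with hlt | hlt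
  · -- x₁ < x₂ : positive corner inside A'
    obtain ⟨a1, a2, haA, ha1, ha2⟩ := hA'mem x₁ y₁ (hBsubA' _ m11)
    obtain ⟨b1, b2, hbA, hb1, hb2⟩ := hA'mem x₂ y₁ (hBsubA' _ m21)
    obtain ⟨c1, c2, hcA, hc1, hc2⟩ := hA'mem x₁ y₂ (hBsubA' _ m12)
    refine ⟨a1, a2, x₂ - x₁, by omega, haA, ?_, ?_⟩
    · have : (a1 + (x₂ - x₁), a2) = (b1, b2) := by simp only [Prod.mk.injEq]; omega
      rw [this]; exact hbA
    · have : (a1, a2 + (x₂ - x₁)) = (c1, c2) := by simp only [Prod.mk.injEq]; omega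
      rw [this]; exact hcA
  · -- x₂ < x₁ : anti-corner, lives in the reflected copy
    obtain ⟨a1, a2, haA, ha1, ha2, ha3, ha4⟩ := hBmem x₁ y₁ m11
    obtain ⟨b1, b2, hbA, hb1, hb2, hb3, hb4⟩ := hBmem x₂ y₁ m21
    obtain ⟨c1, c2, hcA, hc1, hc2, hc3, hc4⟩ := hBmem x₁ y₂ m12
    refine ⟨a1, a2, x₁ - x₂, by omega, haA, ?_, ?_⟩
    · have : (a1 + (x₁ - x₂), a2) = (b1, b2) := by simp only [Prod.mk.injEq]; omega
      rw [this]; exact hbA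
    · have : (a1, a2 + (x₁ - x₂)) = (c1, c2) := by simp only [Prod.mk.injEq]; omega
      rw [this]; exact hcA

open MeasureTheory Finset in
section
open scoped ENNReal

theorem divisor_sum_le (T M : ℕ) (m : ℕ → ℝ≥0∞) :
    ∑ t ∈ Finset.Icc 1 T, ∑ d ∈ Finset.Icc 1 M, m (t * d) ≤
      (M : ℝ≥0∞) * ∑ n ∈ Finset.Icc 1 (T * M), m n := by
  classical
  have hmap : ∀ p ∈ Finset.Icc 1 T ×ˢ Finset.Icc 1 M, p.1 * p.2 ∈ Finset.Icc 1 (T * M) := by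
    rintro ⟨a, b⟩ hp
    simp only [Finset.mem_product, Finset.mem_Icc] at hp ⊢
    exact ⟨Nat.one_le_iff_ne_zero.2 (Nat.mul_ne_zero (by omega) (by omega)),
      Nat.mul_le_mul hp.1.2 hp.2.2⟩
  calc ∑ t ∈ Finset.Icc 1 T, ∑ d ∈ Finset.Icc 1 M, m (t * d)
      = ∑ p ∈ Finset.Icc 1 T ×ˢ Finset.Icc 1 M, m (p.1 * p.2) := by rw [Finset.sum_product]
    _ = ∑ n ∈ Finset.Icc 1 (T * M), ∑ p ∈ (Finset.Icc 1 T ×ˢ Finset.Icc 1 M).filter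
          (fun p => p.1 * p.2 = n), m (p.1 * p.2) :=
        (Finset.sum_fiberwise_of_maps_to hmap _).symm
    _ ≤ ∑ n ∈ Finset.Icc 1 (T * M), (M : ℝ≥0∞) * m n := by
        refine Finset.sum_le_sum fun n hn => ?_
        have hcongr : ∀ p ∈ (Finset.Icc 1 T ×ˢ Finset.Icc 1 M).filter (fun p => p.1 * p.2 = n),
            m (p.1 * p.2) = m n := fun p hp => by rw [(Finset.mem_filter.1 hp).2]
        rw [Finset.sum_congr rfl hcongr, Finset.sum_const, nsmul_eq_mul]
        have hcard : #((Finset.Icc 1 T ×ˢ Finset.Icc 1 M).filter (fun p => p.1 * p.2 = n)) ≤ M := by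
          have := Finset.card_le_card_of_injOn (f := fun p : ℕ × ℕ => p.2)
            (s := (Finset.Icc 1 T ×ˢ Finset.Icc 1 M).filter (fun p => p.1 * p.2 = n))
            (t := Finset.Icc 1 M) ?_ ?_
          · simpa [Nat.card_Icc] using this
          · rintro ⟨a, b⟩ hp
            simp only [Finset.mem_coe, Finset.mem_filter, Finset.mem_product] at hp
            exact hp.1.2
          · rintro ⟨a, b⟩ hp ⟨a', b'⟩ hp' h
            simp only [Finset.coe_filter, Set.mem_setOf_eq, Finset.mem_product,
              Finset.mem_Icc] at hp hp'
            simp only at h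
            simp only [Prod.mk.injEq]
            constructor
            · subst h
              have hb : 0 < b := by omega
              have := hp.2.trans hp'.2.symm
              exact Nat.eq_of_mul_eq_mul_right hb this
            · exact h
        exact mul_le_mul_left (by exact_mod_cast hcard) _
    _ = (M : ℝ≥0∞) * ∑ n ∈ Finset.Icc 1 (T * M), m n := by rw [Finset.mul_sum]

theorem grid_lemma {X : Type*} [MeasurableSpace X] (μ : Measure X) [IsProbabilityMeasure μ]
    (S₁ S₂ : X → X) (h₁ : MeasurePreserving S₁ μ μ) (h₂ : MeasurePreserving S₂ μ μ)
    (hc : ∀ x, S₁ (S₂ x) = S₂ (S₁ x))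
    (W : Set X) (hW : MeasurableSet W) (M : ℕ) (hM : 0 < M)
    (hcorner : ∀ A ⊆ Finset.range M ×ˢ Finset.range M,
      (μ W).toReal / 2 * (M : ℝ) ^ 2 ≤ (#A : ℝ) →
      ∃ x y d : ℕ, 0 < d ∧ (x, y) ∈ A ∧ (x + d, y) ∈ A ∧ (x, y + d) ∈ A) :
    μ W / 2 ≤ (M : ℝ≥0∞) ^ 2 *
      ∑ d ∈ Finset.Icc 1 M, μ (W ∩ S₁^[d] ⁻¹' W ∩ S₂^[d] ⁻¹' W) := by
  classical
  set grid : Finset (ℕ × ℕ) := Finset.range M ×ˢ Finset.range M with hgrid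
  set g : ℕ → ℕ → X → X := fun a b => S₁^[a] ∘ S₂^[b] with hgdef
  have hgm : ∀ a b, MeasurePreserving (g a b) μ μ := fun a b => (h₁.iterate a).comp (h₂.iterate b)
  set C : ℕ → Set X := fun d => W ∩ S₁^[d] ⁻¹' W ∩ S₂^[d] ⁻¹' W with hCdef
  have hCm : ∀ d, MeasurableSet (C d) := fun d =>
    ((hW.inter (((h₁.iterate d).measurable) hW)).inter (((h₂.iterate d).measurable) hW))
  set F : X → ℝ≥0∞ := fun x => ∑ p ∈ grid, ((g p.1 p.2) ⁻¹' W).indicator 1 x with hFdef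
  have hindm : ∀ p : ℕ × ℕ, Measurable ((g p.1 p.2 ⁻¹' W).indicator (1 : X → ℝ≥0∞)) :=
    fun p => measurable_one.indicator ((hgm p.1 p.2).measurable hW)
  have hFm : Measurable F := Finset.measurable_sum _ (fun p _ => hindm p)
  have hFle : ∀ x, F x ≤ (M : ℝ≥0∞) ^ 2 := by
    intro x
    calc F x ≤ ∑ p ∈ grid, 1 := Finset.sum_le_sum (fun p _ =>
          Set.indicator_apply_le (fun _ => le_rfl))
      _ = (M : ℝ≥0∞) ^ 2 := by
          simp [hgrid, Finset.card_product, sq]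
  have hint : ∫⁻ x, F x ∂μ = (M : ℝ≥0∞) ^ 2 * μ W := by
    simp only [hFdef]
    rw [lintegral_finset_sum _ (fun p _ => hindm p)]
    have : ∀ p ∈ grid, ∫⁻ x, ((g p.1 p.2) ⁻¹' W).indicator 1 x ∂μ = μ W := by
      intro p _
      rw [lintegral_indicator_one ((hgm p.1 p.2).measurable hW)]
      exact (hgm p.1 p.2).measure_preimage hW.nullMeasurableSet
    rw [Finset.sum_congr rfl this, Finset.sum_const]
    simp only [hgrid, Finset.card_product, Finset.card_range, Finset.sum_const, nsmul_eq_mul]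
    push_cast
    ring
  set E : Set X := {x | μ W / 2 * (M : ℝ≥0∞) ^ 2 ≤ F x} with hEdef
  have hEm : MeasurableSet E := measurableSet_le measurable_const hFm
  have hcne : μ W / 2 * (M : ℝ≥0∞) ^ 2 ≠ ⊤ :=
    ENNReal.mul_ne_top (ENNReal.div_lt_top (measure_ne_top μ W) (by norm_num)).ne
      (by simp [ENNReal.pow_ne_top])
  -- reverse Markov : μ W / 2 ≤ μ E
  have hME : μ W / 2 ≤ μ E := by
    have hsplit : (M : ℝ≥0∞) ^ 2 * μ W =
        ∫⁻ x in E, F x ∂μ + ∫⁻ x in Eᶜ, F x ∂μ := by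
      rw [lintegral_add_compl F hEm, hint]
    have h1 : ∫⁻ x in E, F x ∂μ ≤ (M : ℝ≥0∞) ^ 2 * μ E := by
      calc ∫⁻ x in E, F x ∂μ ≤ ∫⁻ _ in E, (M : ℝ≥0∞) ^ 2 ∂μ :=
            setLIntegral_mono' hEm (fun x _ => hFle x)
        _ = (M : ℝ≥0∞) ^ 2 * μ E := setLIntegral_const _ _
    have h2 : ∫⁻ x in Eᶜ, F x ∂μ ≤ μ W / 2 * (M : ℝ≥0∞) ^ 2 := by
      calc ∫⁻ x in Eᶜ, F x ∂μ ≤ ∫⁻ _ in Eᶜ, (μ W / 2 * (M : ℝ≥0∞) ^ 2) ∂μ :=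
            setLIntegral_mono' hEm.compl (fun x hx => le_of_not_ge (by simpa [hEdef] using hx))
        _ = μ W / 2 * (M : ℝ≥0∞) ^ 2 * μ Eᶜ := setLIntegral_const _ _
        _ ≤ μ W / 2 * (M : ℝ≥0∞) ^ 2 * 1 := mul_le_mul_right prob_le_one _
        _ = μ W / 2 * (M : ℝ≥0∞) ^ 2 := mul_one _
    have hkey : μ W / 2 * (M : ℝ≥0∞) ^ 2 + μ W / 2 * (M : ℝ≥0∞) ^ 2 ≤
        (M : ℝ≥0∞) ^ 2 * μ E + μ W / 2 * (M : ℝ≥0∞) ^ 2 := by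
      have : μ W / 2 * (M : ℝ≥0∞) ^ 2 + μ W / 2 * (M : ℝ≥0∞) ^ 2 = (M : ℝ≥0∞) ^ 2 * μ W := by
        rw [← add_mul, ENNReal.add_halves, mul_comm]
      rw [this, hsplit]
      exact add_le_add h1 h2
    have h3 : μ W / 2 * (M : ℝ≥0∞) ^ 2 ≤ (M : ℝ≥0∞) ^ 2 * μ E :=
      (ENNReal.add_le_add_iff_right hcne).1 hkey
    have hM2 : ((M : ℝ≥0∞) ^ 2 ≠ 0) :=
      pow_ne_zero 2 (Nat.cast_ne_zero.2 hM.ne')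
    rw [mul_comm (μ W / 2) _] at h3
    exact (ENNReal.mul_le_mul_iff_right hM2 (by simp [ENNReal.pow_ne_top])).1 h3
  -- every point of E lies in some translate of some C d
  have hEsub : E ⊆ ⋃ q ∈ grid ×ˢ Finset.Icc 1 M, (g q.1.1 q.1.2) ⁻¹' (C q.2) := by
    intro x hx
    set A : Finset (ℕ × ℕ) := grid.filter (fun p => g p.1 p.2 x ∈ W) with hAdef
    have hFx : F x = (#A : ℝ≥0∞) := by
      simp only [hFdef, Set.indicator_apply, Set.mem_preimage, Pi.one_apply]
      rw [Finset.sum_boole]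
    have hcard : (μ W).toReal / 2 * (M : ℝ) ^ 2 ≤ (#A : ℝ) := by
      have hle : μ W / 2 * (M : ℝ≥0∞) ^ 2 ≤ (#A : ℝ≥0∞) := by rw [← hFx]; exact hx
      have := ENNReal.toReal_mono (by simp) hle
      simpa [ENNReal.toReal_div, ENNReal.toReal_pow] using this
    obtain ⟨a, b, d, hd, hm1, hm2, hm3⟩ := hcorner A (Finset.filter_subset _ _) hcard
    simp only [hAdef, Finset.mem_filter, hgrid, Finset.mem_product, Finset.mem_range] at hm1 hm2 hm3
    simp only [Set.mem_iUnion, exists_prop]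
    refine ⟨((a, b), d), ?_, ?_⟩
    · simp only [Finset.mem_product, hgrid, Finset.mem_range, Finset.mem_Icc]
      exact ⟨⟨hm1.1.1, hm1.1.2⟩, by omega, by omega⟩
    · simp only [Set.mem_preimage, hCdef, Set.mem_inter_iff]
      have hcom : ∀ z, S₂^[d] (S₁^[a] z) = S₁^[a] (S₂^[d] z) :=
        Function.Commute.iterate_iterate (f := S₂) (g := S₁) (fun y => (hc y).symm) d a
      have e1 : S₁^[d] (g a b x) = g (a + d) b x := by
        simp only [hgdef, Function.comp_apply]
        rw [add_comm a d, Function.iterate_add_apply]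
      have e2 : S₂^[d] (g a b x) = g a (b + d) x := by
        simp only [hgdef, Function.comp_apply]
        rw [hcom, add_comm b d, Function.iterate_add_apply]
      exact ⟨⟨hm1.2, by rw [e1]; exact hm2.2⟩, by rw [e2]; exact hm3.2⟩
  -- union bound
  calc μ W / 2 ≤ μ E := hME
    _ ≤ μ (⋃ q ∈ grid ×ˢ Finset.Icc 1 M, (g q.1.1 q.1.2) ⁻¹' (C q.2)) := measure_mono hEsub
    _ ≤ ∑ q ∈ grid ×ˢ Finset.Icc 1 M, μ ((g q.1.1 q.1.2) ⁻¹' (C q.2)) :=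
        measure_biUnion_finset_le _ _
    _ = ∑ q ∈ grid ×ˢ Finset.Icc 1 M, μ (C q.2) := by
        refine Finset.sum_congr rfl fun q _ => ?_
        exact (hgm q.1.1 q.1.2).measure_preimage (hCm q.2).nullMeasurableSet
    _ = (M : ℝ≥0∞) ^ 2 * ∑ d ∈ Finset.Icc 1 M, μ (C d) := by
        rw [Finset.sum_product]
        have hconst : ∀ x ∈ grid, ∑ y ∈ Finset.Icc 1 M, μ (C (x, y).2)
            = ∑ d ∈ Finset.Icc 1 M, μ (C d) := fun x _ => rfl
        rw [Finset.sum_congr rfl hconst, Finset.sum_const, nsmul_eq_mul]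
        simp only [hgrid, Finset.card_product, Finset.card_range]
        push_cast
        ring

open MeasureTheory Finset in
theorem recurrence_avg {X : Type*} [MeasurableSpace X] (μ : Measure X) [IsProbabilityMeasure μ]
    (T₁ T₂ : X → X) (h₁ : MeasurePreserving T₁ μ μ) (h₂ : MeasurePreserving T₂ μ μ)
    (hc : ∀ x, T₁ (T₂ x) = T₂ (T₁ x))
    (W : Set X) (hW : MeasurableSet W) (hWpos : 0 < μ W) :
    ∃ c : ℝ, 0 < c ∧ ∃ N₁ : ℕ, ∀ N : ℕ, N₁ ≤ N →
      c ≤ (1 / (N : ℝ)) * ∑ n ∈ Finset.range N,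
        (μ (W ∩ T₁^[n] ⁻¹' W ∩ T₂^[n] ⁻¹' W)).toReal := by
  classical
  have haW : μ W ≠ ⊤ := measure_ne_top μ W
  have ha : 0 < (μ W).toReal := ENNReal.toReal_pos hWpos.ne' haW
  obtain ⟨M, hMpos, hoc⟩ := oriented_corners_theorem ((μ W).toReal / 2) (by positivity)
  set C : ℕ → Set X := fun n => W ∩ T₁^[n] ⁻¹' W ∩ T₂^[n] ⁻¹' W with hCdef
  have hgrid : ∀ t : ℕ, μ W / 2 ≤ (M:ℝ≥0∞)^2 * ∑ d ∈ Finset.Icc 1 M, μ (C (t * d)) := by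
    intro t
    have hcom : ∀ x, T₁^[t] (T₂^[t] x) = T₂^[t] (T₁^[t] x) :=
      Function.Commute.iterate_iterate (f := T₁) (g := T₂) hc t t
    have hgl := grid_lemma μ (T₁^[t]) (T₂^[t]) (h₁.iterate t) (h₂.iterate t) hcom W hW M hMpos
      (hoc M le_rfl)
    simpa only [← Function.iterate_mul, hCdef] using hgl
  have hsum : ∀ T N : ℕ, T * M ≤ N - 1 →
      (T : ℝ≥0∞) * (μ W / 2) ≤ (M : ℝ≥0∞) ^ 3 * ∑ n ∈ Finset.range N, μ (C n) := by
    intro T N hTM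
    calc (T : ℝ≥0∞) * (μ W / 2) = ∑ _t ∈ Finset.Icc 1 T, (μ W / 2) := by
          rw [Finset.sum_const, Nat.card_Icc, nsmul_eq_mul]; norm_num
      _ ≤ ∑ t ∈ Finset.Icc 1 T, (M:ℝ≥0∞)^2 * ∑ d ∈ Finset.Icc 1 M, μ (C (t * d)) :=
          Finset.sum_le_sum fun t _ => hgrid t
      _ = (M:ℝ≥0∞)^2 * ∑ t ∈ Finset.Icc 1 T, ∑ d ∈ Finset.Icc 1 M, μ (C (t * d)) := by
          rw [Finset.mul_sum]
      _ ≤ (M:ℝ≥0∞)^2 * ((M:ℝ≥0∞) * ∑ n ∈ Finset.Icc 1 (T * M), μ (C n)) :=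
          mul_le_mul_right (divisor_sum_le T M fun n => μ (C n)) _
      _ ≤ (M:ℝ≥0∞)^3 * ∑ n ∈ Finset.range N, μ (C n) := by
          rw [← mul_assoc, ← pow_succ]
          refine mul_le_mul_right (Finset.sum_le_sum_of_subset ?_) _
          intro n hn
          simp only [Finset.mem_Icc] at hn
          simp only [Finset.mem_range]
          omega
  refine ⟨(μ W).toReal / (4 * (M:ℝ)^4), by positivity, 2 * M, fun N hN => ?_⟩
  set T := (N - 1) / M with hTdef
  have hTM : T * M ≤ N - 1 := Nat.div_mul_le_self _ _
  have hNkey : N ≤ 2 * (M * T) := by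
    have hd : M * T + (N - 1) % M = N - 1 := Nat.div_add_mod (N - 1) M
    have hmod : (N - 1) % M < M := Nat.mod_lt _ hMpos
    rcases Nat.eq_zero_or_pos T with hT0 | hTpos
    · rw [hT0, Nat.mul_zero] at hd ⊢
      omega
    · have h1 : M ≤ M * T := Nat.le_mul_of_pos_right _ hTpos
      generalize hP : M * T = P at hd h1 ⊢
      omega
  set SE := ∑ n ∈ Finset.range N, μ (C n) with hSEdef
  have hSEne : SE ≠ ⊤ := by
    have hSEle : SE ≤ (N : ℝ≥0∞) := by
      calc SE ≤ ∑ _n ∈ Finset.range N, 1 := Finset.sum_le_sum fun n _ => prob_le_one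
        _ = (N : ℝ≥0∞) := by simp
    exact (lt_of_le_of_lt hSEle (ENNReal.natCast_lt_top N)).ne
  have hrne : (M : ℝ≥0∞)^3 * SE ≠ ⊤ :=
    ENNReal.mul_ne_top (by simp [ENNReal.pow_ne_top]) hSEne
  have hreal := ENNReal.toReal_mono hrne (hsum T N hTM)
  simp only [ENNReal.toReal_mul, ENNReal.toReal_div, ENNReal.toReal_pow,
    ENNReal.toReal_natCast, ENNReal.toReal_ofNat] at hreal
  -- hreal : (T:ℝ) * ((μ W).toReal / 2) ≤ (M:ℝ)^3 * SE.toReal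
  have hSr : SE.toReal = ∑ n ∈ Finset.range N, (μ (C n)).toReal :=
    ENNReal.toReal_sum (fun n _ => measure_ne_top μ _)
  show _ ≤ 1 / (N : ℝ) * ∑ n ∈ Finset.range N, (μ (C n)).toReal
  rw [← hSr]
  have hMr : (1:ℝ) ≤ (M:ℝ) := by exact_mod_cast hMpos
  have hN0 : 0 < N := by omega
  have hNr : (0:ℝ) < (N:ℝ) := by exact_mod_cast hN0
  have hNT : (N:ℝ) ≤ 2 * ((M:ℝ) * (T:ℝ)) := by exact_mod_cast hNkey
  have key : (N:ℝ) * (μ W).toReal ≤ 4 * (M:ℝ)^4 * SE.toReal := by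
    nlinarith [mul_le_mul_of_nonneg_right hNT ha.le,
      mul_le_mul_of_nonneg_left hreal (by positivity : (0:ℝ) ≤ 4 * (M:ℝ))]
  rw [one_div_mul_eq_div, div_le_div_iff₀ (by positivity) hNr]
  nlinarith [key]

end

open Finset in
/-- (Furstenberg–Katznelson positivity consequence.) If `T₁, T₂` are commuting invertible
measure preserving transformations, `V` has positive measure and `R` is the `L¹(μ)`-limit
of the averages `(1/N) ∑_{n<N} 1_V(T₁ⁿ x) 1_V(T₂ⁿ x)`, then `R > 0` μ-a.e. on `V`. -/
theorem limit_function_pos_on_set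
    {X : Type*} [MeasurableSpace X] (μ : Measure X) [IsProbabilityMeasure μ]
    (T₁ T₂ : Equiv.Perm X)
    (hT₁m : Measurable T₁) (hT₁m' : Measurable T₁.symm)
    (hT₂m : Measurable T₂) (hT₂m' : Measurable T₂.symm)
    (hT₁ : MeasurePreserving T₁ μ μ) (hT₂ : MeasurePreserving T₂ μ μ)
    (hcomm : ∀ x, T₁ (T₂ x) = T₂ (T₁ x))
    (V : Set X) (hV : MeasurableSet V) (hVpos : 0 < μ V)
    (R : X → ℝ) (hR : Integrable R μ)
    (hlim : Tendsto (fun N : ℕ => ∫ x,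
        |(1 / (N : ℝ)) * ∑ n ∈ Finset.range N,
            (V.indicator (fun _ => (1 : ℝ)) ((⇑T₁)^[n] x)) *
            (V.indicator (fun _ => (1 : ℝ)) ((⇑T₂)^[n] x)) - R x| ∂μ)
      atTop (𝓝 0)) :
    ∀ᵐ x ∂(μ.restrict V), 0 < R x := by
  classical
  by_contra hcon
  set R' : X → ℝ := hR.1.mk R with hR'def
  have hR'me : StronglyMeasurable R' := hR.1.stronglyMeasurable_mk
  have hRR' : R =ᵐ[μ] R' := hR.1.ae_eq_mk
  have hR'int : Integrable R' μ := hR.congr hRR'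
  have hconV : ¬ ∀ᵐ x ∂(μ.restrict V), 0 < R' x := by
    intro h
    apply hcon
    filter_upwards [h, ae_restrict_of_ae hRR'] with x h1 h2
    rw [h2]; exact h1
  set W : Set X := {x | R' x ≤ 0} ∩ V with hWdef
  have hWm : MeasurableSet W :=
    (measurableSet_le hR'me.measurable measurable_const).inter hV
  have hWV : W ⊆ V := Set.inter_subset_right
  have hWpos : 0 < μ W := by
    rw [pos_iff_ne_zero]
    intro h0
    apply hconV
    rw [ae_restrict_iff' hV, ae_iff]
    have hset : {x | ¬(x ∈ V → 0 < R' x)} = W := by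
      ext x
      simp only [hWdef, Set.mem_setOf_eq, Set.mem_inter_iff, Classical.not_imp, not_lt]
      tauto
    rw [hset]; exact h0
  -- the sets D n and the indicator identity
  set D : ℕ → Set X := fun n => (⇑T₁)^[n] ⁻¹' V ∩ (⇑T₂)^[n] ⁻¹' V with hDdef
  have hDm : ∀ n, MeasurableSet (D n) := fun n =>
    ((hT₁m.iterate n) hV).inter ((hT₂m.iterate n) hV)
  have hψ : ∀ n, (fun x => V.indicator (fun _ => (1:ℝ)) ((⇑T₁)^[n] x) *
      V.indicator (fun _ => (1:ℝ)) ((⇑T₂)^[n] x)) = (D n).indicator (fun _ => (1:ℝ)) := by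
    intro n
    funext x
    by_cases h1 : (⇑T₁)^[n] x ∈ V <;> by_cases h2 : (⇑T₂)^[n] x ∈ V <;>
      simp only [Set.indicator_apply, hDdef, Set.mem_inter_iff, Set.mem_preimage, h1, h2,
        if_true, if_false, and_self, and_true, true_and, and_false, false_and] <;>
      norm_num
  have hψint : ∀ n, Integrable ((D n).indicator fun _ => (1:ℝ)) μ := fun n =>
    (integrable_indicator_iff (hDm n)).2 (integrableOn_const (measure_lt_top μ _).ne)
  set Φ : ℕ → X → ℝ := fun N x => (1/(N:ℝ)) * ∑ n ∈ Finset.range N,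
    (D n).indicator (fun _ => (1:ℝ)) x with hΦdef
  have hΦint : ∀ N, Integrable (Φ N) μ := fun N =>
    (integrable_finset_sum _ (fun n _ => hψint n)).const_mul _
  have hΦeq : ∀ N x, Φ N x = (1 / (N : ℝ)) * ∑ n ∈ Finset.range N,
      (V.indicator (fun _ => (1 : ℝ)) ((⇑T₁)^[n] x)) *
      (V.indicator (fun _ => (1 : ℝ)) ((⇑T₂)^[n] x)) := by
    intro N x
    simp only [hΦdef]
    congr 1
    exact Finset.sum_congr rfl fun n _ => (congrFun (hψ n) x).symm
  -- lower bound for the averages over W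
  have hlow : ∀ N : ℕ, (1/(N:ℝ)) * ∑ n ∈ Finset.range N,
      (μ (W ∩ (⇑T₁)^[n] ⁻¹' W ∩ (⇑T₂)^[n] ⁻¹' W)).toReal ≤ ∫ x in W, Φ N x ∂μ := by
    intro N
    simp only [hΦdef]
    rw [integral_const_mul, integral_finset_sum _ (fun n _ => (hψint n).integrableOn)]
    refine mul_le_mul_of_nonneg_left (Finset.sum_le_sum fun n _ => ?_) (by positivity)
    rw [integral_indicator_const (1:ℝ) (hDm n), measureReal_def, Measure.restrict_apply (hDm n), smul_eq_mul,
      mul_one]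
    refine ENNReal.toReal_mono (measure_ne_top μ _) (measure_mono ?_)
    intro x hx
    obtain ⟨⟨hxW, hx1⟩, hx2⟩ := hx
    exact ⟨⟨hWV hx1, hWV hx2⟩, hxW⟩
  -- convergence of ∫_W Φ N to ∫_W R
  have hlim' : Tendsto (fun N : ℕ => ∫ x, |Φ N x - R x| ∂μ) atTop (𝓝 0) := by
    have hfe : (fun N : ℕ => ∫ x, |Φ N x - R x| ∂μ) = (fun N : ℕ => ∫ x,
        |(1 / (N : ℝ)) * ∑ n ∈ Finset.range N,
            (V.indicator (fun _ => (1 : ℝ)) ((⇑T₁)^[n] x)) *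
            (V.indicator (fun _ => (1 : ℝ)) ((⇑T₂)^[n] x)) - R x| ∂μ) := by
      funext N
      congr 1
      funext x
      rw [hΦeq]
    rw [hfe]
    exact hlim
  have hconv : Tendsto (fun N => ∫ x in W, Φ N x ∂μ) atTop (𝓝 (∫ x in W, R x ∂μ)) := by
    rw [tendsto_iff_dist_tendsto_zero]
    refine squeeze_zero (fun N => dist_nonneg) (fun N => ?_) hlim'
    rw [Real.dist_eq, ← integral_sub (hΦint N).integrableOn hR.integrableOn]
    calc |∫ x in W, (Φ N x - R x) ∂μ|
        ≤ ∫ x in W, |Φ N x - R x| ∂μ := by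
          simpa [Real.norm_eq_abs] using
            norm_integral_le_integral_norm (μ := μ.restrict W) (fun x => Φ N x - R x)
      _ ≤ ∫ x, |Φ N x - R x| ∂μ :=
          setIntegral_le_integral ((hΦint N).sub hR).abs
            (Filter.Eventually.of_forall fun x => abs_nonneg _)
  -- recurrence lower bound
  obtain ⟨c, hc, N₁, hrec⟩ := recurrence_avg μ (⇑T₁) (⇑T₂) hT₁ hT₂ hcomm W hWm hWpos
  have hLge : c ≤ ∫ x in W, R x ∂μ := by
    refine ge_of_tendsto hconv ?_
    filter_upwards [eventually_ge_atTop N₁] with N hN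
    exact le_trans (hrec N hN) (hlow N)
  have hL0 : ∫ x in W, R x ∂μ ≤ 0 := by
    rw [integral_congr_ae (ae_restrict_of_ae hRR')]
    refine integral_nonpos_of_ae ?_
    rw [EventuallyLE, ae_restrict_iff' hWm]
    exact Filter.Eventually.of_forall fun x hx => hx.1
  linarith
end
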